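/- arXiv:1811.04368 — 2 statements merged into one kernel-verified Lean document; each statement's English description precedes it below -/
import Mathlib

section
/- (Weighted Trudinger–Moser type estimate for the primitive.) Let P : ℝ → [0,∞) be continuous, bounded and tending to 0 as |x| → +∞. Let f : ℝ → [0,∞) be continuous with f(t) = 0 for t ≤ 0, f(t) = o(t) as t → 0, and α₀-critical growth at +∞; set F(t) = ∫₀^t f(s) ds. Then for every ε₀ > 0, α > α₀, q > 2 and s > 1 with r = s/(s−1), there exists C > 0 such that for every measurable u : ℝ → ℝ: ∫_ℝ P(x) F(u) dx ≤ ε₀ ∫_ℝ P(x) u² dx + C ( ∫_ℝ P(x) |u|^{qr} dx )^{1/r} ( ∫_ℝ (e^{α s u²} − 1) dx )^{1/s}. -/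
open MeasureTheory Real Filter Topology

/-- The Gagliardo seminorm squared `[u]² = ∫∫ |u(x)-u(y)|²/|x-y|² dx dy`. -/
noncomputable def gagliardo (u : ℝ → ℝ) : ℝ :=
  ∫ x : ℝ, ∫ y : ℝ, (u x - u y) ^ 2 / |x - y| ^ 2

/-- Membership in the fractional Sobolev space `H^{1/2,2}(ℝ)`:
`u ∈ L²(ℝ)` with finite Gagliardo seminorm. -/
def memH12 (u : ℝ → ℝ) : Prop :=
  MemLp u 2 (volume : Measure ℝ) ∧
    Integrable (fun p : ℝ × ℝ => (u p.1 - u p.2) ^ 2 / |p.1 - p.2| ^ 2)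
      (volume : Measure (ℝ × ℝ))

/-- The inner product of `H^{1/2,2}(ℝ)`. -/
noncomputable def innerH12 (u v : ℝ → ℝ) : ℝ :=
  (2 * Real.pi)⁻¹ * (∫ x : ℝ, ∫ y : ℝ, (u x - u y) * (v x - v y) / |x - y| ^ 2)
    + ∫ x : ℝ, u x * v x

/-- The norm of `H^{1/2,2}(ℝ)`. -/
noncomputable def normH12 (u : ℝ → ℝ) : ℝ := Real.sqrt (innerH12 u u)

/-- Weak convergence `u_n ⇀ u₀` in `H^{1/2,2}(ℝ)`. -/
def weakConvH12 (u : ℕ → ℝ → ℝ) (u₀ : ℝ → ℝ) : Prop :=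
  ∀ φ : ℝ → ℝ, memH12 φ →
    Tendsto (fun n => innerH12 (u n) φ) atTop (𝓝 (innerH12 u₀ φ))

/-- `h` has `α₀`-critical growth at `+∞`. -/
def criticalGrowth (h : ℝ → ℝ) (α₀ : ℝ) : Prop :=
  (∀ α : ℝ, α₀ < α →
    Tendsto (fun s => h s * Real.exp (-α * s ^ 2)) atTop (𝓝 0)) ∧
  (∀ α : ℝ, α < α₀ →
    Tendsto (fun s => h s * Real.exp (-α * s ^ 2)) atTop atTop)

/-- The primitive `F(t) = ∫₀ᵗ f(s) ds`. -/
noncomputable def primF (f : ℝ → ℝ) (t : ℝ) : ℝ := ∫ s in (0:ℝ)..t, f s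

/-- Hypothesis (H1). -/
def hypH1 (f : ℝ → ℝ) : Prop :=
  Continuous f ∧ (∀ t, 0 ≤ f t) ∧ f 0 = 0 ∧ ∀ t ≤ 0, f t = 0

/-- Hypothesis (H2): `f(t) = o(t)` as `t → 0`. -/
def hypH2 (f : ℝ → ℝ) : Prop :=
  Tendsto (fun t => f t / t) (𝓝[≠] (0:ℝ)) (𝓝 0)

/-- Hypothesis (H3): Ambrosetti-Rabinowitz condition. -/
def hypH3 (f g : ℝ → ℝ) : Prop :=
  ∃ θ : ℝ, 2 < θ ∧ ∀ t : ℝ, 0 < t →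
    (0 < θ * primF f t ∧ θ * primF f t ≤ t * f t) ∧
    (0 < θ * primF g t ∧ θ * primF g t ≤ t * g t)

/-- Hypothesis (H4): `t f(t) e^{-α₀ t²} → +∞` as `t → +∞`. -/
def hypH4 (f : ℝ → ℝ) (α₀ : ℝ) : Prop :=
  Tendsto (fun t => t * f t * Real.exp (-α₀ * t ^ 2)) atTop atTop

/-- Continuous, nonnegative weight vanishing at infinity. -/
def vanishAtInfty (P : ℝ → ℝ) : Prop :=
  Continuous P ∧ (∀ x, 0 ≤ P x) ∧ Tendsto P (cocompact ℝ) (𝓝 0)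

/-- The energy functional `I(u,v)`. -/
noncomputable def energyI (P Q f g : ℝ → ℝ) (u v : ℝ → ℝ) : ℝ :=
  innerH12 u v - (∫ x : ℝ, P x * primF f (u x)) - ∫ x : ℝ, Q x * primF g (v x)

/-- The derivative `I'(u,v)(φ,ψ)`. -/
noncomputable def energyI' (P Q f g u v φ ψ : ℝ → ℝ) : ℝ :=
  innerH12 u ψ + innerH12 v φ - (∫ x : ℝ, P x * f (u x) * φ x)
    - ∫ x : ℝ, Q x * g (v x) * ψ x

/-- The class `𝔠_P`. -/
def classCP (P f : ℝ → ℝ) : Prop :=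
  ∀ u : ℕ → ℝ → ℝ, (∀ n, memH12 (u n)) → weakConvH12 u (fun _ => 0) →
    (∃ C : ℝ, 0 < C ∧ ∀ n, (∫ x : ℝ, P x * f (u n x) * u n x) ≤ C) →
    Tendsto (fun n => ∫ x : ℝ, P x * primF f (u n x)) atTop (𝓝 0)

/-- The Moser function `ω̄_k`. -/
noncomputable def moser (k : ℕ) (x : ℝ) : ℝ :=
  if |x| ≤ 1 / (k : ℝ) then Real.sqrt (Real.log k) / Real.sqrt Real.pi
  else if |x| ≤ 1 then
    Real.log (1 / |x|) / (Real.sqrt Real.pi * Real.sqrt (Real.log k))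
  else 0

/-- The normalized Moser function `m_k = ω̄_k / ‖ω̄_k‖_{1/2}`. -/
noncomputable def moserN (k : ℕ) (x : ℝ) : ℝ := moser k x / normH12 (moser k)

/-- The piecewise linear plateau sequence. -/
noncomputable def plateau (α : ℝ) (n : ℕ) (x : ℝ) : ℝ :=
  if (n : ℝ) ≤ x ∧ x ≤ 2 * (n : ℝ) then (n : ℝ) ^ (-α)
  else if (n : ℝ) - 1 ≤ x ∧ x ≤ (n : ℝ) then (n : ℝ) ^ (-α) * (x - ((n : ℝ) - 1))
  else if 2 * (n : ℝ) ≤ x ∧ x ≤ 2 * (n : ℝ) + 1 then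
    (n : ℝ) ^ (-α) * ((2 * (n : ℝ) + 1) - x)
  else 0

private lemma exp_sub_one_rpow {x s : ℝ} (hx : 0 ≤ x) (hs : 1 ≤ s) :
    (Real.exp x - 1) ^ s ≤ Real.exp (s * x) - 1 := by
  have ha : (0:ℝ) ≤ Real.exp x - 1 := by
    have := Real.one_le_exp hx; linarith
  have h := NNReal.add_rpow_le_rpow_add (Real.exp x - 1).toNNReal 1 hs
  have h2 := NNReal.coe_le_coe.mpr h
  have h3 : (Real.exp x - 1) ^ s + 1 ≤ (Real.exp x - 1 + 1) ^ s := by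
    simpa [NNReal.coe_rpow, Real.coe_toNNReal _ ha] using h2
  have h4 : (Real.exp x - 1 + 1) ^ s = Real.exp (s * x) := by
    rw [sub_add_cancel, ← Real.exp_mul, mul_comm]
  rw [h4] at h3
  linarith
set_option maxHeartbeats 1600000 in
/-- Weighted Trudinger–Moser type estimate for the primitive. -/
theorem weighted_tm_estimate
    (P : ℝ → ℝ) (hPc : Continuous P) (hP0 : ∀ x, 0 ≤ P x)
    (hPb : ∃ M : ℝ, ∀ x, P x ≤ M)
    (hPv : Tendsto P (cocompact ℝ) (𝓝 0))
    (f : ℝ → ℝ) (hfc : Continuous f) (hfnn : ∀ t, 0 ≤ f t)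
    (hfneg : ∀ t ≤ 0, f t = 0)
    (hf2 : hypH2 f)
    (α₀ : ℝ) (hα₀ : 0 < α₀) (hcrit : criticalGrowth f α₀)
    (ε₀ α q s : ℝ) (hε₀ : 0 < ε₀) (hα : α₀ < α) (hq : 2 < q) (hs : 1 < s) :
    ∃ C : ℝ, 0 < C ∧ ∀ u : ℝ → ℝ, Measurable u →
      (∫⁻ x : ℝ, ENNReal.ofReal (P x * primF f (u x))) ≤
        ENNReal.ofReal ε₀ * (∫⁻ x : ℝ, ENNReal.ofReal (P x * u x ^ 2)) +
          ENNReal.ofReal C *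
            ((∫⁻ x : ℝ, ENNReal.ofReal (P x * |u x| ^ (q * (s / (s - 1))))) ^
                (1 / (s / (s - 1))) *
              (∫⁻ x : ℝ, ENNReal.ofReal (Real.exp (α * s * u x ^ 2) - 1)) ^
                (1 / s)) := by
  classical
  obtain ⟨M, hM⟩ := hPb
  set Mb := max M 1 with hMbdef
  have hMb1 : (1:ℝ) ≤ Mb := le_max_right _ _
  have hMb0 : (0:ℝ) ≤ Mb := by linarith
  have hPMb : ∀ x, P x ≤ Mb := fun x => (hM x).trans (le_max_left _ _)
  clear_value Mb
  have hα0' : (0:ℝ) < α := lt_trans hα₀ hα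
  have hq0 : (0:ℝ) < q := by linarith
  have hs0 : (0:ℝ) < s := by linarith
  have hs1 : (0:ℝ) < s - 1 := by linarith
  set r : ℝ := s / (s - 1) with hrdef
  have hr1 : 1 < r := (one_lt_div hs1).mpr (by linarith)
  have hr0 : (0:ℝ) < r := by linarith
  have hconj : r.HolderConjugate s := by rw [hrdef]; exact (Real.HolderConjugate.conjExponent hs).symm
  have hrs1 : 1 / r + 1 / s = 1 := by rw [one_div, one_div]; exact hconj.inv_add_inv_eq_one
  clear_value r
  -- δ from (H2)
  obtain ⟨δ₁, hδ₁pos, hδ₁⟩ := Metric.tendsto_nhdsWithin_nhds.mp hf2 ε₀ hε₀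
  set δ : ℝ := δ₁ / 2 with hδdef
  have hδpos : 0 < δ := by rw [hδdef]; positivity
  clear_value δ
  have hsmall : ∀ t : ℝ, 0 ≤ t → t ≤ δ → f t ≤ ε₀ * t := by
    intro t ht hle
    rcases eq_or_lt_of_le ht with h | h
    · rw [← h, hfneg 0 le_rfl]; simp
    · have hne : t ∈ ({(0:ℝ)}ᶜ : Set ℝ) := by simpa using h.ne'
      have hd : dist t 0 < δ₁ := by
        rw [Real.dist_eq, sub_zero, abs_of_pos h]
        calc t ≤ δ := hle
        _ < δ₁ := by rw [hδdef]; linarith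
      have := hδ₁ hne hd
      rw [Real.dist_eq, sub_zero] at this
      have h2 : f t / t < ε₀ := lt_of_le_of_lt (le_abs_self _) this
      have := (div_lt_iff₀ h).mp h2
      linarith
  have hfint : ∀ a b : ℝ, IntervalIntegrable f volume a b :=
    fun a b => hfc.intervalIntegrable a b
  -- F vanishes on nonpositive reals
  have hFzero : ∀ t : ℝ, t ≤ 0 → primF f t = 0 := by
    intro t ht
    unfold primF
    have : Set.EqOn f 0 (Set.uIcc 0 t) := by
      intro x hx
      rw [Set.uIcc_of_ge ht] at hx
      exact hfneg x hx.2
    rw [intervalIntegral.integral_congr this]; simp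
  -- small-t bound : F(t) ≤ ε₀ t²
  have hF_small : ∀ t : ℝ, 0 ≤ t → t ≤ δ → primF f t ≤ ε₀ * t ^ 2 := by
    intro t ht hle
    have h1 : primF f t ≤ ∫ x in (0:ℝ)..t, ε₀ * x := by
      apply intervalIntegral.integral_mono_on ht (hfint 0 t)
        ((continuous_const.mul continuous_id).intervalIntegrable 0 t)
      intro x hx
      exact hsmall x hx.1 (hx.2.trans hle)
    have h2 : (∫ x in (0:ℝ)..t, ε₀ * x) = ε₀ * (t ^ 2 / 2) := by
      rw [intervalIntegral.integral_const_mul, integral_id]; ring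
    rw [h2] at h1
    nlinarith [sq_nonneg t]
  -- critical growth : f(t) ≤ exp(α' t²) for large t
  set α' : ℝ := (α₀ + α) / 2 with hα'def
  have hα'1 : α₀ < α' := by rw [hα'def]; linarith
  have hα'2 : α' < α := by rw [hα'def]; linarith
  have hα'pos : 0 < α' := lt_trans hα₀ hα'1
  clear_value α'
  have hev : ∀ᶠ t in atTop, f t * Real.exp (-α' * t ^ 2) < 1 :=
    (hcrit.1 α' hα'1).eventually (gt_mem_nhds one_pos)
  obtain ⟨T₀, hT₀⟩ := eventually_atTop.mp hev
  set T : ℝ := max T₀ δ with hTdef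
  have hTδ : δ ≤ T := le_max_right _ _
  have hT0 : 0 ≤ T := hδpos.le.trans hTδ
  clear_value T
  have hfexp : ∀ t : ℝ, T ≤ t → f t ≤ Real.exp (α' * t ^ 2) := by
    intro t ht
    have hT₀T : T₀ ≤ T := by rw [hTdef]; exact le_max_left _ _
    have h := hT₀ t (hT₀T.trans ht)
    rw [neg_mul, Real.exp_neg] at h
    have hep : 0 < Real.exp (α' * t ^ 2) := Real.exp_pos _
    calc f t = f t * (Real.exp (α' * t ^ 2))⁻¹ * Real.exp (α' * t ^ 2) := by
          field_simp
    _ ≤ 1 * Real.exp (α' * t ^ 2) := by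
          apply mul_le_mul_of_nonneg_right h.le hep.le
    _ = Real.exp (α' * t ^ 2) := one_mul _
  -- bound of f on [0, T]
  obtain ⟨M₁₀, hM₁₀⟩ :=
    (isCompact_Icc : IsCompact (Set.Icc (0:ℝ) T)).exists_bound_of_continuousOn
      hfc.continuousOn
  set M₁ : ℝ := max M₁₀ 0 with hM₁def
  have hM₁0 : 0 ≤ M₁ := le_max_right _ _
  have hM₁ : ∀ t ∈ Set.Icc (0:ℝ) T, f t ≤ M₁ := by
    intro t ht
    have := hM₁₀ t ht
    rw [Real.norm_eq_abs] at this
    exact (le_abs_self _).trans (this.trans (by rw [hM₁def]; exact le_max_left _ _))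
  clear_value M₁
  -- global growth bound
  have hFb : ∀ t : ℝ, 0 ≤ t → primF f t ≤ M₁ * t + t * Real.exp (α' * t ^ 2) := by
    intro t ht
    have hFM : ∀ b : ℝ, 0 ≤ b → b ≤ T → primF f b ≤ M₁ * b := by
      intro b hb hbT
      have h1 : primF f b ≤ ∫ _x in (0:ℝ)..b, M₁ := by
        apply intervalIntegral.integral_mono_on hb (hfint 0 b)
          (intervalIntegrable_const)
        intro x hx
        exact hM₁ x ⟨hx.1, hx.2.trans hbT⟩
      rw [intervalIntegral.integral_const, smul_eq_mul] at h1
      calc primF f b ≤ (b - 0) * M₁ := h1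
      _ = M₁ * b := by ring
    rcases le_or_gt t T with h | h
    · have h1 := hFM t ht h
      have h2 : 0 ≤ t * Real.exp (α' * t ^ 2) :=
        mul_nonneg ht (Real.exp_pos _).le
      linarith
    · have hsplit : primF f T + (∫ x in T..t, f x) = primF f t :=
        intervalIntegral.integral_add_adjacent_intervals (hfint 0 T) (hfint T t)
      have h1 := hFM T hT0 le_rfl
      have h2 : (∫ x in T..t, f x) ≤ ∫ _x in T..t, Real.exp (α' * t ^ 2) := by
        apply intervalIntegral.integral_mono_on h.le (hfint T t)
          intervalIntegrable_const
        intro x hx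
        refine (hfexp x hx.1).trans (Real.exp_le_exp.mpr ?_)
        have hx0 : 0 ≤ x := hT0.trans hx.1
        nlinarith [mul_nonneg (mul_nonneg hα'pos.le (sub_nonneg.mpr hx.2))
          (by linarith : (0:ℝ) ≤ t + x)]
      rw [intervalIntegral.integral_const, smul_eq_mul] at h2
      have h3 : (t - T) * Real.exp (α' * t ^ 2) ≤ t * Real.exp (α' * t ^ 2) := by
        apply mul_le_mul_of_nonneg_right _ (Real.exp_pos _).le
        linarith
      nlinarith [hsplit, h1, h2, h3, mul_le_mul_of_nonneg_left h.le hM₁0]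
  -- large-t bound
  set c : ℝ := α - α' with hcdef
  have hc : 0 < c := by rw [hcdef]; linarith
  clear_value c
  have hee : Real.exp (-α * δ ^ 2) < 1 := by
    rw [Real.exp_lt_one_iff]
    have : 0 < α * δ ^ 2 := by positivity
    linarith
  set K : ℝ := (1 - Real.exp (-α * δ ^ 2))⁻¹ with hKdef
  have hKpos : 0 < K := by
    rw [hKdef]
    exact inv_pos.mpr (by linarith)
  clear_value K
  set C₂ : ℝ := (M₁ + 1) * Real.exp (1 / (4 * c)) * K / δ ^ q with hC₂def
  have hδq : (0:ℝ) < δ ^ q := Real.rpow_pos_of_pos hδpos q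
  have hC₂pos : 0 < C₂ := by
    rw [hC₂def]
    have h1 : (0:ℝ) < M₁ + 1 := by linarith
    positivity
  clear_value C₂
  have hlarge : ∀ t : ℝ, δ ≤ t →
      primF f t ≤ C₂ * (t ^ q * (Real.exp (α * t ^ 2) - 1)) := by
    intro t ht
    have ht0 : 0 ≤ t := hδpos.le.trans ht
    have hE1 : 1 ≤ Real.exp (α * t ^ 2) := Real.one_le_exp (by positivity)
    -- step 1 : F(t) ≤ (M₁+1) * (t * exp(α' t²))
    have h1 : primF f t ≤ (M₁ + 1) * (t * Real.exp (α' * t ^ 2)) := by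
      have h := hFb t ht0
      have he1 : 1 ≤ Real.exp (α' * t ^ 2) := Real.one_le_exp (by positivity)
      have hmono : M₁ * t ≤ M₁ * (t * Real.exp (α' * t ^ 2)) :=
        mul_le_mul_of_nonneg_left (le_mul_of_one_le_right ht0 he1) hM₁0
      calc primF f t ≤ M₁ * t + t * Real.exp (α' * t ^ 2) := h
      _ ≤ M₁ * (t * Real.exp (α' * t ^ 2)) + t * Real.exp (α' * t ^ 2) := by
            linarith
      _ = (M₁ + 1) * (t * Real.exp (α' * t ^ 2)) := by ring
    -- step 2 : t * exp(α' t²) ≤ exp(1/(4c)) * exp(α t²)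
    have h2 : t * Real.exp (α' * t ^ 2) ≤
        Real.exp (1 / (4 * c)) * Real.exp (α * t ^ 2) := by
      have hb : t * Real.exp (α' * t ^ 2) ≤ Real.exp (t + α' * t ^ 2) := by
        calc t * Real.exp (α' * t ^ 2) ≤ Real.exp t * Real.exp (α' * t ^ 2) := by
              apply mul_le_mul_of_nonneg_right _ (Real.exp_pos _).le
              linarith [Real.add_one_le_exp t]
        _ = Real.exp (t + α' * t ^ 2) := (Real.exp_add _ _).symm
      have harg : t + α' * t ^ 2 = t - c * t ^ 2 + α * t ^ 2 := by
        rw [hcdef]; ring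
      rw [harg] at hb
      have hcc : t - c * t ^ 2 ≤ 1 / (4 * c) := by
        rw [le_div_iff₀ (by linarith : (0:ℝ) < 4 * c)]
        nlinarith [sq_nonneg (2 * c * t - 1)]
      calc t * Real.exp (α' * t ^ 2) ≤ Real.exp (t - c * t ^ 2 + α * t ^ 2) := hb
      _ ≤ Real.exp (1 / (4 * c) + α * t ^ 2) := by
            apply Real.exp_le_exp.mpr; linarith
      _ = Real.exp (1 / (4 * c)) * Real.exp (α * t ^ 2) := Real.exp_add _ _
    -- step 3 : exp(α t²) ≤ K * (exp(α t²) - 1)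
    have h3 : Real.exp (α * t ^ 2) ≤ K * (Real.exp (α * t ^ 2) - 1) := by
      have hge : 1 ≤ Real.exp (-α * δ ^ 2) * Real.exp (α * t ^ 2) := by
        rw [← Real.exp_add]
        apply Real.one_le_exp
        nlinarith [mul_le_mul_of_nonneg_left
          (pow_le_pow_left₀ hδpos.le ht 2) hα0'.le]
      have h1e : 0 < 1 - Real.exp (-α * δ ^ 2) := by linarith
      have h3' : Real.exp (α * t ^ 2) * (1 - Real.exp (-α * δ ^ 2)) ≤
          Real.exp (α * t ^ 2) - 1 := by nlinarith [hge]
      rw [hKdef, ← div_eq_inv_mul, le_div_iff₀ h1e]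
      exact h3'
    -- step 4 : move δ^q to t^q
    have h4 : (M₁ + 1) * Real.exp (1 / (4 * c)) * K = C₂ * δ ^ q := by
      rw [hC₂def]; field_simp
    have h5 : C₂ * δ ^ q ≤ C₂ * t ^ q :=
      mul_le_mul_of_nonneg_left (Real.rpow_le_rpow hδpos.le ht hq0.le) hC₂pos.le
    have hEnn : 0 ≤ Real.exp (α * t ^ 2) - 1 := by linarith
    calc primF f t ≤ (M₁ + 1) * (t * Real.exp (α' * t ^ 2)) := h1
    _ ≤ (M₁ + 1) * (Real.exp (1 / (4 * c)) * Real.exp (α * t ^ 2)) := by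
          apply mul_le_mul_of_nonneg_left h2 (by linarith)
    _ ≤ (M₁ + 1) * (Real.exp (1 / (4 * c)) * (K * (Real.exp (α * t ^ 2) - 1))) := by
          apply mul_le_mul_of_nonneg_left _ (by linarith : (0:ℝ) ≤ M₁ + 1)
          exact mul_le_mul_of_nonneg_left h3 (Real.exp_pos _).le
    _ = C₂ * δ ^ q * (Real.exp (α * t ^ 2) - 1) := by rw [← h4]; ring
    _ ≤ C₂ * t ^ q * (Real.exp (α * t ^ 2) - 1) :=
          mul_le_mul_of_nonneg_right h5 hEnn
    _ = C₂ * (t ^ q * (Real.exp (α * t ^ 2) - 1)) := by ring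
  -- key pointwise estimate
  have key : ∀ t : ℝ, primF f t ≤
      ε₀ * t ^ 2 + C₂ * (|t| ^ q * (Real.exp (α * t ^ 2) - 1)) := by
    intro t
    have hE : 0 ≤ Real.exp (α * t ^ 2) - 1 := by
      have := Real.one_le_exp (by positivity : (0:ℝ) ≤ α * t ^ 2); linarith
    have habs : 0 ≤ |t| ^ q := Real.rpow_nonneg (abs_nonneg t) q
    have hrhs2 : 0 ≤ C₂ * (|t| ^ q * (Real.exp (α * t ^ 2) - 1)) :=
      mul_nonneg hC₂pos.le (mul_nonneg habs hE)
    have hrhs1 : 0 ≤ ε₀ * t ^ 2 := mul_nonneg hε₀.le (sq_nonneg t)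
    rcases le_or_gt t 0 with h | h
    · rw [hFzero t h]; linarith
    rcases le_or_gt t δ with h2 | h2
    · have := hF_small t h.le h2; linarith
    · have h3 := hlarge t h2.le
      rw [abs_of_pos h]
      linarith
  -- the constant
  refine ⟨C₂ * Mb ^ (1 / s), by positivity, ?_⟩
  intro u hu
  -- notation
  set E : ℝ → ℝ := fun x => Real.exp (α * u x ^ 2) - 1 with hEdef
  have hEnn : ∀ x, 0 ≤ E x := by
    intro x
    have := Real.one_le_exp (by positivity : (0:ℝ) ≤ α * u x ^ 2)
    simp only [hEdef]; linarith
  -- measurability helpers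
  have hum : Measurable u := hu
  have humq : Measurable fun x => |u x| ^ q :=
    (Real.continuous_rpow_const hq0.le).measurable.comp hum.abs
  have humqr : Measurable fun x => |u x| ^ (q * r) :=
    (Real.continuous_rpow_const (by positivity : 0 ≤ q * r)).measurable.comp hum.abs
  have hPm : Measurable P := hPc.measurable
  have hPr : Measurable fun x => P x ^ (1 / r) :=
    (Real.continuous_rpow_const (by positivity)).measurable.comp hPm
  have hPs : Measurable fun x => P x ^ (1 / s) :=
    (Real.continuous_rpow_const (by positivity)).measurable.comp hPm
  have hEm : Measurable E := by
    apply Measurable.sub _ measurable_const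
    exact Real.measurable_exp.comp ((measurable_const.mul (hum.pow_const 2)))
  have hu2m : Measurable fun x => u x ^ 2 := hum.pow_const 2
  -- step A : pointwise bound and splitting
  have stepA : (∫⁻ x : ℝ, ENNReal.ofReal (P x * primF f (u x))) ≤
      ENNReal.ofReal ε₀ * (∫⁻ x : ℝ, ENNReal.ofReal (P x * u x ^ 2)) +
        ENNReal.ofReal C₂ * (∫⁻ x : ℝ, ENNReal.ofReal (P x * (|u x| ^ q * E x))) := by
    have hmono : (∫⁻ x : ℝ, ENNReal.ofReal (P x * primF f (u x))) ≤
        ∫⁻ x : ℝ, (ENNReal.ofReal (ε₀ * (P x * u x ^ 2)) +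
          ENNReal.ofReal (C₂ * (P x * (|u x| ^ q * E x)))) := by
      apply lintegral_mono
      intro x
      have hk := key (u x)
      have h1 : P x * primF f (u x) ≤
          ε₀ * (P x * u x ^ 2) + C₂ * (P x * (|u x| ^ q * E x)) := by
        have := mul_le_mul_of_nonneg_left hk (hP0 x)
        calc P x * primF f (u x) ≤
            P x * (ε₀ * u x ^ 2 + C₂ * (|u x| ^ q * (Real.exp (α * u x ^ 2) - 1))) :=
              this
        _ = ε₀ * (P x * u x ^ 2) + C₂ * (P x * (|u x| ^ q * E x)) := by
              simp only [hEdef]; ring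
      calc ENNReal.ofReal (P x * primF f (u x)) ≤
          ENNReal.ofReal (ε₀ * (P x * u x ^ 2) + C₂ * (P x * (|u x| ^ q * E x))) :=
            ENNReal.ofReal_le_ofReal h1
      _ ≤ ENNReal.ofReal (ε₀ * (P x * u x ^ 2)) +
            ENNReal.ofReal (C₂ * (P x * (|u x| ^ q * E x))) :=
            ENNReal.ofReal_add_le
    have hmeas1 : Measurable fun x => ENNReal.ofReal (ε₀ * (P x * u x ^ 2)) :=
      (measurable_const.mul (hPm.mul hu2m)).ennreal_ofReal
    rw [lintegral_add_left hmeas1] at hmono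
    have he1 : (∫⁻ x : ℝ, ENNReal.ofReal (ε₀ * (P x * u x ^ 2))) =
        ENNReal.ofReal ε₀ * ∫⁻ x : ℝ, ENNReal.ofReal (P x * u x ^ 2) := by
      rw [← lintegral_const_mul' _ _ ENNReal.ofReal_ne_top]
      congr 1
      funext x
      rw [← ENNReal.ofReal_mul hε₀.le]
    have he2 : (∫⁻ x : ℝ, ENNReal.ofReal (C₂ * (P x * (|u x| ^ q * E x)))) =
        ENNReal.ofReal C₂ * ∫⁻ x : ℝ, ENNReal.ofReal (P x * (|u x| ^ q * E x)) := by
      rw [← lintegral_const_mul' _ _ ENNReal.ofReal_ne_top]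
      congr 1
      funext x
      rw [← ENNReal.ofReal_mul hC₂pos.le]
    rw [he1, he2] at hmono
    exact hmono
  -- step B : Hölder
  set Af : ℝ → ENNReal := fun x => ENNReal.ofReal (P x ^ (1 / r) * |u x| ^ q) with hAfdef
  set Bf : ℝ → ENNReal := fun x => ENNReal.ofReal (P x ^ (1 / s) * E x) with hBfdef
  have hAfm : Measurable Af := (hPr.mul humq).ennreal_ofReal
  have hBfm : Measurable Bf := (hPs.mul hEm).ennreal_ofReal
  have hprod : ∀ x, ENNReal.ofReal (P x * (|u x| ^ q * E x)) = (Af * Bf) x := by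
    intro x
    have h1 : (Af * Bf) x =
        ENNReal.ofReal (P x ^ (1 / r) * |u x| ^ q * (P x ^ (1 / s) * E x)) := by
      simp only [Pi.mul_apply, hAfdef, hBfdef]
      rw [ENNReal.ofReal_mul (mul_nonneg (Real.rpow_nonneg (hP0 x) _)
        (Real.rpow_nonneg (abs_nonneg _) _))]
    rw [h1]
    congr 1
    have hPP : P x ^ (1 / r) * P x ^ (1 / s) = P x := by
      rw [← Real.rpow_add_of_nonneg (hP0 x) (by positivity) (by positivity), hrs1,
        Real.rpow_one]
    calc P x * (|u x| ^ q * E x)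
        = P x ^ (1 / r) * P x ^ (1 / s) * (|u x| ^ q * E x) := by rw [hPP]
    _ = P x ^ (1 / r) * |u x| ^ q * (P x ^ (1 / s) * E x) := by ring
  have hhold := ENNReal.lintegral_mul_le_Lp_mul_Lq volume hconj hAfm.aemeasurable
    hBfm.aemeasurable
  -- identify Af ^ r
  have hAr : ∀ x, Af x ^ r = ENNReal.ofReal (P x * |u x| ^ (q * r)) := by
    intro x
    simp only [hAfdef]
    rw [ENNReal.ofReal_rpow_of_nonneg (mul_nonneg (Real.rpow_nonneg (hP0 x) _)
      (Real.rpow_nonneg (abs_nonneg _) _)) hr0.le]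
    congr 1
    rw [Real.mul_rpow (Real.rpow_nonneg (hP0 x) _) (Real.rpow_nonneg (abs_nonneg _) _),
      ← Real.rpow_mul (hP0 x), ← Real.rpow_mul (abs_nonneg _), one_div,
      inv_mul_cancel₀ (ne_of_gt hr0), Real.rpow_one]
  -- bound Bf ^ s
  have hBs : ∀ x, Bf x ^ s ≤ ENNReal.ofReal (Mb * (Real.exp (α * s * u x ^ 2) - 1)) := by
    intro x
    simp only [hBfdef]
    rw [ENNReal.ofReal_rpow_of_nonneg (mul_nonneg (Real.rpow_nonneg (hP0 x) _) (hEnn x))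
      hs0.le]
    apply ENNReal.ofReal_le_ofReal
    rw [Real.mul_rpow (Real.rpow_nonneg (hP0 x) _) (hEnn x), ← Real.rpow_mul (hP0 x),
      one_div, inv_mul_cancel₀ (ne_of_gt hs0), Real.rpow_one]
    have hx1 : E x ^ s ≤ Real.exp (α * s * u x ^ 2) - 1 := by
      have := exp_sub_one_rpow (x := α * u x ^ 2) (by positivity) hs.le
      simp only [hEdef]
      convert this using 3 <;> ring
    calc P x * E x ^ s ≤ Mb * E x ^ s :=
          mul_le_mul_of_nonneg_right (hPMb x) (Real.rpow_nonneg (hEnn x) s)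
    _ ≤ Mb * (Real.exp (α * s * u x ^ 2) - 1) :=
          mul_le_mul_of_nonneg_left hx1 hMb0
  -- assemble
  set X := ∫⁻ x : ℝ, ENNReal.ofReal (Real.exp (α * s * u x ^ 2) - 1) with hXdef
  set A2 := ∫⁻ x : ℝ, ENNReal.ofReal (P x * |u x| ^ (q * r)) with hA2def
  have hstepB : (∫⁻ x : ℝ, ENNReal.ofReal (P x * (|u x| ^ q * E x))) ≤
      A2 ^ (1 / r) * (ENNReal.ofReal (Mb ^ (1 / s)) * X ^ (1 / s)) := by
    have e1 : (∫⁻ x : ℝ, ENNReal.ofReal (P x * (|u x| ^ q * E x))) =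
        ∫⁻ x : ℝ, (Af * Bf) x :=
      lintegral_congr fun x => hprod x
    have e2 : (∫⁻ x : ℝ, Af x ^ r) = A2 := by
      rw [hA2def]; exact lintegral_congr fun x => hAr x
    have e3 : (∫⁻ x : ℝ, Bf x ^ s) ≤ ENNReal.ofReal Mb * X := by
      calc (∫⁻ x : ℝ, Bf x ^ s) ≤
          ∫⁻ x : ℝ, ENNReal.ofReal (Mb * (Real.exp (α * s * u x ^ 2) - 1)) :=
            lintegral_mono fun x => hBs x
      _ = ENNReal.ofReal Mb * X := by
          rw [hXdef, ← lintegral_const_mul' _ _ ENNReal.ofReal_ne_top]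
          exact lintegral_congr fun x => (ENNReal.ofReal_mul hMb0)
    have e4 : (∫⁻ x : ℝ, Bf x ^ s) ^ (1 / s) ≤
        ENNReal.ofReal (Mb ^ (1 / s)) * X ^ (1 / s) := by
      calc (∫⁻ x : ℝ, Bf x ^ s) ^ (1 / s) ≤ (ENNReal.ofReal Mb * X) ^ (1 / s) :=
            ENNReal.rpow_le_rpow e3 (by positivity)
      _ = ENNReal.ofReal Mb ^ (1 / s) * X ^ (1 / s) :=
            ENNReal.mul_rpow_of_nonneg _ _ (by positivity)
      _ = ENNReal.ofReal (Mb ^ (1 / s)) * X ^ (1 / s) := by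
            rw [ENNReal.ofReal_rpow_of_nonneg hMb0 (by positivity)]
    calc (∫⁻ x : ℝ, ENNReal.ofReal (P x * (|u x| ^ q * E x)))
        = ∫⁻ x : ℝ, (Af * Bf) x := e1
    _ ≤ (∫⁻ x : ℝ, Af x ^ r) ^ (1 / r) * (∫⁻ x : ℝ, Bf x ^ s) ^ (1 / s) := hhold
    _ = A2 ^ (1 / r) * (∫⁻ x : ℝ, Bf x ^ s) ^ (1 / s) := by rw [e2]
    _ ≤ A2 ^ (1 / r) * (ENNReal.ofReal (Mb ^ (1 / s)) * X ^ (1 / s)) :=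
          mul_le_mul_right e4 _
  calc (∫⁻ x : ℝ, ENNReal.ofReal (P x * primF f (u x)))
      ≤ ENNReal.ofReal ε₀ * (∫⁻ x : ℝ, ENNReal.ofReal (P x * u x ^ 2)) +
        ENNReal.ofReal C₂ *
          (∫⁻ x : ℝ, ENNReal.ofReal (P x * (|u x| ^ q * E x))) := stepA
  _ ≤ ENNReal.ofReal ε₀ * (∫⁻ x : ℝ, ENNReal.ofReal (P x * u x ^ 2)) +
        ENNReal.ofReal C₂ *
          (A2 ^ (1 / r) * (ENNReal.ofReal (Mb ^ (1 / s)) * X ^ (1 / s))) :=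
        add_le_add_right (mul_le_mul_right hstepB _) _
  _ = ENNReal.ofReal ε₀ * (∫⁻ x : ℝ, ENNReal.ofReal (P x * u x ^ 2)) +
        ENNReal.ofReal (C₂ * Mb ^ (1 / s)) * (A2 ^ (1 / r) * X ^ (1 / s)) := by
        rw [ENNReal.ofReal_mul hC₂pos.le]
        ring
end

section
/- (The plateau sequence is bounded and converges weakly to 0.) For α ∈ [1/2, 1) define u_n : ℝ → ℝ by u_n(x) = n^{−α} for x ∈ [n, 2n], u_n(x) = n^{−α}(x − (n−1)) for x ∈ [n−1, n], u_n(x) = n^{−α}((2n+1) − x) for x ∈ [2n, 2n+1], and u_n(x) = 0 otherwise. Then each u_n ∈ H^{1/2,2}(ℝ), the sequence {u_n} is bounded in H^{1/2,2}(ℝ) (that is, sup_n ( (2π)^{-1}[u_n]² + ∥u_n∥²_{L²} ) < ∞), and u_n ⇀ 0 weakly in H^{1/2,2}(ℝ). -/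
open MeasureTheory Real Filter Topology

section plateauAux
open Set

/-! ### Auxiliary machinery for the plateau sequence -/

noncomputable def tentAux (a b x : ℝ) : ℝ := min 1 (max 0 (min (x - a) (b - x)))

lemma tentAux_nonneg (a b x : ℝ) : 0 ≤ tentAux a b x := le_min zero_le_one (le_max_left _ _)

lemma tentAux_le_one (a b x : ℝ) : tentAux a b x ≤ 1 := min_le_left _ _

lemma tentAux_cont (a b : ℝ) : Continuous (tentAux a b) := by
  unfold tentAux
  exact continuous_const.min (continuous_const.max
    ((continuous_id.sub continuous_const).min (continuous_const.sub continuous_id)))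

lemma tentAux_lip (a b x y : ℝ) : |tentAux a b x - tentAux a b y| ≤ |x - y| := by
  have h1 : |tentAux a b x - tentAux a b y| ≤
      max |(1:ℝ) - 1| |max 0 (min (x - a) (b - x)) - max 0 (min (y - a) (b - y))| :=
    abs_min_sub_min_le_max _ _ _ _
  have h2 : |max (0:ℝ) (min (x - a) (b - x)) - max 0 (min (y - a) (b - y))| ≤
      max |(0:ℝ) - 0| |min (x - a) (b - x) - min (y - a) (b - y)| :=
    abs_max_sub_max_le_max _ _ _ _
  have h3 : |min (x - a) (b - x) - min (y - a) (b - y)| ≤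
      max |(x - a) - (y - a)| |(b - x) - (b - y)| := abs_min_sub_min_le_max _ _ _ _
  have e1 : |(x - a) - (y - a)| = |x - y| := by ring_nf
  have e2 : |(b - x) - (b - y)| = |x - y| := by
    rw [show (b - x) - (b - y) = -(x - y) by ring, abs_neg]
  simp only [sub_self, abs_zero] at h1 h2
  calc |tentAux a b x - tentAux a b y| ≤ _ := h1.trans_eq (max_eq_right (abs_nonneg _))
    _ ≤ _ := h2.trans_eq (max_eq_right (abs_nonneg _))
    _ ≤ _ := h3
    _ ≤ |x - y| := by rw [e1, e2, max_self]

lemma tentAux_eq_zero {a b x : ℝ} (h : x ≤ a ∨ b ≤ x) : tentAux a b x = 0 := by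
  have : min (x - a) (b - x) ≤ 0 := by
    rcases h with h | h
    · exact (min_le_left _ _).trans (by linarith)
    · exact (min_le_right _ _).trans (by linarith)
  unfold tentAux
  rw [max_eq_left this, min_eq_right zero_le_one]

lemma plateau_eq_tent (α : ℝ) (n : ℕ) (x : ℝ) :
    plateau α n x = (n : ℝ) ^ (-α) * tentAux ((n : ℝ) - 1) (2 * (n : ℝ) + 1) x := by
  have hn : (0:ℝ) ≤ n := Nat.cast_nonneg n
  unfold plateau tentAux
  split_ifs with h1 h2 h3
  · have : min (x - ((n:ℝ) - 1)) ((2 * n + 1) - x) ≥ 1 :=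
      le_min (by linarith [h1.1]) (by linarith [h1.2])
    rw [max_eq_right (by linarith), min_eq_left (by linarith), mul_one]
  · have hxn : x < (n:ℝ) := lt_of_not_ge fun h => h1 ⟨h, h2.2.trans (by linarith)⟩
    have : min (x - ((n:ℝ) - 1)) ((2 * n + 1) - x) = x - ((n:ℝ) - 1) :=
      min_eq_left (by linarith [h2.1, h2.2])
    rw [this, max_eq_right (by linarith [h2.1]), min_eq_right (by linarith [h2.2])]
  · have hxn : (2:ℝ) * n < x := lt_of_not_ge fun h => h1 ⟨(by linarith [h3.1]), h⟩
    have : min (x - ((n:ℝ) - 1)) ((2 * n + 1) - x) = (2 * n + 1) - x :=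
      min_eq_right (by linarith [h3.1, h3.2])
    rw [this, max_eq_right (by linarith [h3.2]), min_eq_right (by linarith [h3.1])]
  · push_neg at h1 h2 h3
    have hout : x < (n:ℝ) - 1 ∨ 2 * (n:ℝ) + 1 < x := by
      by_contra hc
      push_neg at hc
      rcases le_or_gt x (n:ℝ) with h | h
      · rcases le_or_gt ((n:ℝ) - 1) x with h' | h'
        · exact absurd (h2 h') (not_lt.2 h)
        · exact absurd hc.1 (not_le.2 h')
      · rcases le_or_gt x (2*(n:ℝ)) with h'' | h''
        · exact absurd (h1 h.le) (not_lt.2 h'')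
        · exact absurd (h3 h''.le) (not_lt.2 hc.2)
    have hz := tentAux_eq_zero (a := (n:ℝ) - 1) (b := 2 * (n:ℝ) + 1) (x := x)
      (by rcases hout with h|h; exacts [Or.inl h.le, Or.inr h.le])
    unfold tentAux at hz
    rw [hz]
    ring

lemma shear_int (F G : ℝ → ℝ) (hF : Integrable F (volume : Measure ℝ))
    (hG : Integrable G (volume : Measure ℝ)) :
    Integrable (fun p : ℝ × ℝ => F p.1 * G (p.2 - p.1)) (volume : Measure (ℝ × ℝ)) ∧
    ∫ p : ℝ × ℝ, F p.1 * G (p.2 - p.1) = (∫ x, F x) * ∫ x, G x := by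
  have hpres : MeasurePreserving (fun z : ℝ × ℝ => (z.1, z.2 - z.1))
      ((volume : Measure ℝ).prod volume) ((volume : Measure ℝ).prod volume) :=
    measurePreserving_prod_sub volume volume
  have hI : Integrable (fun q : ℝ × ℝ => F q.1 * G q.2) ((volume : Measure ℝ).prod volume) :=
    hF.mul_prod hG
  have hcomp : Integrable ((fun q : ℝ × ℝ => F q.1 * G q.2) ∘ (fun z : ℝ × ℝ => (z.1, z.2 - z.1)))
      ((volume : Measure ℝ).prod volume) :=
    (hpres.integrable_comp hI.aestronglyMeasurable).2 hI
  have hemb : MeasurableEmbedding (fun z : ℝ × ℝ => (z.1, z.2 - z.1)) :=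
    (MeasurableEquiv.shearSubRight ℝ).measurableEmbedding
  constructor
  · rw [Measure.volume_eq_prod]; exact hcomp
  · rw [Measure.volume_eq_prod]
    calc ∫ p : ℝ × ℝ, F p.1 * G (p.2 - p.1) ∂((volume : Measure ℝ).prod volume)
        = ∫ q : ℝ × ℝ, F q.1 * G q.2 ∂((volume : Measure ℝ).prod volume) :=
          hpres.integral_comp hemb (fun q => F q.1 * G q.2)
      _ = (∫ x, F x) * ∫ x, G x := integral_prod_mul F G

lemma tendsto_indicator_integral {X : Type*} [MeasurableSpace X] {μ : Measure X} (f : X → ℝ)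
    (hf : Integrable f μ) (A : ℕ → Set X) (hA : ∀ n, MeasurableSet (A n))
    (hpt : ∀ x, ∀ᶠ n in atTop, x ∉ A n) :
    Tendsto (fun n => ∫ x, (A n).indicator f x ∂μ) atTop (𝓝 0) := by
  have := tendsto_integral_of_dominated_convergence (F := fun n => (A n).indicator f)
    (f := fun _ => (0:ℝ)) (bound := fun x => |f x|)
    (fun n => hf.aestronglyMeasurable.indicator (hA n)) hf.abs
    (fun n => Filter.Eventually.of_forall fun x => by
      simpa using norm_indicator_le_norm_self f x)
    (Filter.Eventually.of_forall fun x => by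
      refine tendsto_const_nhds.congr' ?_
      filter_upwards [hpt x] with n hn
      exact (Set.indicator_of_notMem hn f).symm)
  simpa using this

lemma tendsto_of_amgm (f T : ℕ → ℝ) (B : ℝ) (hT : Tendsto T atTop (𝓝 0))
    (hT0 : ∀ n, 0 ≤ T n)
    (h : ∀ ε : ℝ, 0 < ε → ∀ n, |f n| ≤ ε * B + T n / (4 * ε)) :
    Tendsto f atTop (𝓝 0) := by
  rw [NormedAddCommGroup.tendsto_nhds_zero]
  intro ε hε
  have hB1 : (0:ℝ) < |B| + 1 := by positivity
  set δ : ℝ := ε / (2 * (|B| + 1)) with hδdef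
  have hδ : 0 < δ := by positivity
  have key : ∀ n, |f n| ≤ ε / 2 + T n / (4 * δ) := by
    intro n
    refine (h δ hδ n).trans (by
      have : δ * B ≤ ε / 2 := by
        have hBle : B ≤ |B| + 1 := (le_abs_self B).trans (by linarith)
        calc δ * B ≤ δ * (|B| + 1) := by nlinarith
          _ = ε / 2 := by rw [hδdef, div_mul_eq_mul_div, div_eq_div_iff (by positivity) (by norm_num)]; ring
      linarith)
  have hTsmall : ∀ᶠ n in atTop, T n < 4 * δ * (ε / 4) := by
    have := (tendsto_order.1 hT).2 (4 * δ * (ε / 4)) (by positivity)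
    simpa using this
  filter_upwards [hTsmall] with n hn
  have : T n / (4 * δ) < ε / 4 := by
    rw [div_lt_iff₀ (by positivity)]
    linarith [hn]
  calc ‖f n‖ = |f n| := rfl
    _ ≤ ε / 2 + T n / (4 * δ) := key n
    _ < ε := by linarith

lemma amgm_abs {ε : ℝ} (hε : 0 < ε) (a b : ℝ) : |a * b| ≤ ε * a ^ 2 + b ^ 2 / (4 * ε) := by
  have h4 : (0:ℝ) < 4 * ε := by linarith
  have h2 : 4 * ε * |a * b| ≤ 4 * ε * (ε * a ^ 2) + b ^ 2 := by
    rw [abs_mul]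
    have h0 : 0 ≤ (2 * ε * |a| - |b|) ^ 2 := sq_nonneg _
    have e1 : (2 * ε * |a| - |b|) ^ 2 =
        4 * ε * (ε * |a| ^ 2) - 4 * ε * (|a| * |b|) + |b| ^ 2 := by ring
    rw [e1, sq_abs, sq_abs] at h0
    linarith
  calc |a * b| ≤ (4 * ε * (ε * a ^ 2) + b ^ 2) / (4 * ε) := by
        rw [le_div_iff₀ h4]; linarith
    _ = ε * a ^ 2 + b ^ 2 / (4 * ε) := by field_simp

lemma amgm_div {ε : ℝ} (hε : 0 < ε) (a b w : ℝ) (hw : 0 ≤ w) :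
    |a * b / w| ≤ ε * (a ^ 2 / w) + (b ^ 2 / w) / (4 * ε) := by
  rcases eq_or_lt_of_le hw with h0 | h0
  · rw [← h0]
    simp [div_zero]
  · have h1 : |a * b / w| = |a * b| / w := by rw [abs_div, abs_of_nonneg hw]
    rw [h1]
    calc |a * b| / w ≤ (ε * a ^ 2 + b ^ 2 / (4 * ε)) / w := by
          gcongr
          exact amgm_abs hε a b
      _ = ε * (a ^ 2 / w) + (b ^ 2 / w) / (4 * ε) := by
          field_simp

lemma c2_mul_le {α : ℝ} (hα : 1/2 ≤ α) (n : ℕ) {d : ℝ} (hd : 0 ≤ d) (hd4 : d ≤ 4) :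
    ((n:ℝ) ^ (-α)) ^ 2 * ((n:ℝ) + d) ≤ 5 := by
  rcases Nat.eq_zero_or_pos n with hn | hn
  · subst hn
    rw [Nat.cast_zero, Real.zero_rpow (by intro h; simp at h; linarith)]
    norm_num
  · have hn1 : (1:ℝ) ≤ (n:ℝ) := by exact_mod_cast hn
    have hc2 : ((n:ℝ) ^ (-α)) ^ 2 ≤ ((n:ℝ))⁻¹ := by
      rw [← Real.rpow_natCast ((n:ℝ) ^ (-α)) 2, ← Real.rpow_mul (Nat.cast_nonneg n)]
      calc (n:ℝ) ^ (-α * ((2:ℕ):ℝ)) ≤ (n:ℝ) ^ (-1 : ℝ) :=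
            Real.rpow_le_rpow_of_exponent_le hn1 (by push_cast; linarith)
        _ = ((n:ℝ))⁻¹ := Real.rpow_neg_one _
    have hnd : (0:ℝ) ≤ (n:ℝ) + d := by linarith
    calc ((n:ℝ) ^ (-α)) ^ 2 * ((n:ℝ) + d) ≤ ((n:ℝ))⁻¹ * ((n:ℝ) + d) :=
          mul_le_mul_of_nonneg_right hc2 hnd
      _ ≤ 5 := by
          rw [inv_mul_le_iff₀ (by linarith)]
          nlinarith

section core
variable (α : ℝ) (n : ℕ)

lemma plateau_cont : Continuous (plateau α n) := by
  have : plateau α n = fun x => (n : ℝ) ^ (-α) * tentAux ((n : ℝ) - 1) (2 * (n : ℝ) + 1) x := by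
    funext x; exact plateau_eq_tent α n x
  rw [this]
  exact continuous_const.mul (tentAux_cont _ _)

lemma plateau_nonneg (x : ℝ) : 0 ≤ plateau α n x := by
  rw [plateau_eq_tent]
  exact mul_nonneg (rpow_nonneg (Nat.cast_nonneg n) _) (tentAux_nonneg _ _ _)

lemma plateau_le (x : ℝ) : plateau α n x ≤ (n : ℝ) ^ (-α) := by
  rw [plateau_eq_tent]
  calc (n:ℝ) ^ (-α) * tentAux _ _ x ≤ (n:ℝ) ^ (-α) * 1 :=
        mul_le_mul_of_nonneg_left (tentAux_le_one _ _ _) (rpow_nonneg (Nat.cast_nonneg n) _)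
    _ = _ := mul_one _

lemma plateau_lip (x y : ℝ) :
    |plateau α n x - plateau α n y| ≤ (n : ℝ) ^ (-α) * |x - y| := by
  rw [plateau_eq_tent, plateau_eq_tent, ← mul_sub, abs_mul,
    abs_of_nonneg (rpow_nonneg (Nat.cast_nonneg n) (-α))]
  exact mul_le_mul_of_nonneg_left (tentAux_lip _ _ _ _) (rpow_nonneg (Nat.cast_nonneg n) _)

lemma plateau_supp {x : ℝ} (h : x ≤ (n:ℝ) - 1 ∨ 2*(n:ℝ)+1 ≤ x) : plateau α n x = 0 := by
  rw [plateau_eq_tent, tentAux_eq_zero h, mul_zero]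

set_option maxHeartbeats 2000000 in
lemma plateau_core :
    Integrable (fun p : ℝ × ℝ => (plateau α n p.1 - plateau α n p.2) ^ 2 / |p.1 - p.2| ^ 2)
      (volume : Measure (ℝ × ℝ)) ∧
    (∫ p : ℝ × ℝ, (plateau α n p.1 - plateau α n p.2) ^ 2 / |p.1 - p.2| ^ 2) ≤
      ((n:ℝ) ^ (-α)) ^ 2 * (2*((n:ℝ)+4) + 8*π*((n:ℝ)+2)) ∧
    Integrable (fun x => plateau α n x ^ 2) (volume : Measure ℝ) ∧
    (∫ x, plateau α n x ^ 2) ≤ ((n:ℝ) ^ (-α)) ^ 2 * ((n:ℝ)+2) := by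
  set u := plateau α n with hu
  set c := (n:ℝ) ^ (-α) with hc
  have hc0 : 0 ≤ c := rpow_nonneg (Nat.cast_nonneg n) _
  set a := (n:ℝ) - 1 with ha
  set b := 2*(n:ℝ) + 1 with hb
  set S := Icc a b with hS
  set K := Icc (a-1) (b+1) with hK
  set Sind := S.indicator (fun _ => (1:ℝ)) with hSind
  set Kind := K.indicator (fun _ => (1:ℝ)) with hKind
  set G1 := (Icc (-1:ℝ) 1).indicator (fun _ => (1:ℝ)) with hG1
  set G2 := fun t : ℝ => (1 + t^2)⁻¹ with hG2
  -- generic indicator facts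
  have hind : ∀ (T : Set ℝ) (z : ℝ),
      0 ≤ T.indicator (fun _ => (1:ℝ)) z ∧ T.indicator (fun _ => (1:ℝ)) z ≤ 1 := by
    intro T z; by_cases hz : z ∈ T <;> simp [Set.indicator_apply, hz]
  have hG2pos : ∀ t : ℝ, 0 < G2 t := by
    intro t; rw [hG2]; positivity
  -- integrability of 1d pieces
  have hSint : Integrable Sind (volume : Measure ℝ) := by
    rw [hSind]
    exact (integrableOn_const measure_Icc_lt_top.ne).integrable_indicator
      measurableSet_Icc
  have hKint : Integrable Kind (volume : Measure ℝ) := by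
    rw [hKind]
    exact (integrableOn_const measure_Icc_lt_top.ne).integrable_indicator
      measurableSet_Icc
  have hG1int : Integrable G1 (volume : Measure ℝ) := by
    rw [hG1]
    exact (integrableOn_const measure_Icc_lt_top.ne).integrable_indicator
      measurableSet_Icc
  have hG2int : Integrable G2 (volume : Measure ℝ) := by
    rw [hG2]; exact integrable_inv_one_add_sq
  have hSval : ∫ z, Sind z = (n:ℝ) + 2 := by
    rw [hSind, hS, integral_indicator_const (1:ℝ) measurableSet_Icc, smul_eq_mul, mul_one,
      measureReal_def, Real.volume_Icc, ENNReal.toReal_ofReal (by rw [ha, hb]; push_cast; linarith)]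
    rw [ha, hb]; ring
  have hKval : ∫ z, Kind z = (n:ℝ) + 4 := by
    rw [hKind, hK, integral_indicator_const (1:ℝ) measurableSet_Icc, smul_eq_mul, mul_one,
      measureReal_def, Real.volume_Icc, ENNReal.toReal_ofReal (by rw [ha, hb]; push_cast; linarith)]
    rw [ha, hb]; ring
  have hG1val : ∫ z, G1 z = 2 := by
    rw [hG1, integral_indicator_const (1:ℝ) measurableSet_Icc, smul_eq_mul, mul_one,
      measureReal_def, Real.volume_Icc, ENNReal.toReal_ofReal (by norm_num)]
    norm_num
  have hG2val : ∫ z, G2 z = π := by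
    rw [hG2]; exact integral_univ_inv_one_add_sq
  -- the three pieces of the dominating function
  set F1 : ℝ → ℝ := fun z => c^2 * Kind z with hF1
  set F2 : ℝ → ℝ := fun z => 4*c^2 * Sind z with hF2
  have hF1int : Integrable F1 (volume : Measure ℝ) := hKint.const_mul _
  have hF2int : Integrable F2 (volume : Measure ℝ) := hSint.const_mul _
  obtain ⟨hP1int, hP1val⟩ := shear_int F1 G1 hF1int hG1int
  obtain ⟨hP2int, hP2val⟩ := shear_int F2 G2 hF2int hG2int
  -- the third piece via swap
  have hswap_eq : (fun p : ℝ × ℝ => F2 p.2 * G2 (p.2 - p.1)) =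
      (fun q : ℝ × ℝ => F2 q.1 * G2 (q.2 - q.1)) ∘ Prod.swap := by
    funext p
    simp only [Function.comp_apply, Prod.fst_swap, Prod.snd_swap]
    congr 1
    simp only [hG2]
    ring_nf
  have hP3int : Integrable (fun p : ℝ × ℝ => F2 p.2 * G2 (p.2 - p.1))
      (volume : Measure (ℝ × ℝ)) := by
    rw [hswap_eq, Measure.volume_eq_prod]
    exact Integrable.swap (by rw [← Measure.volume_eq_prod]; exact hP2int)
  have hP3val : ∫ p : ℝ × ℝ, F2 p.2 * G2 (p.2 - p.1) = (∫ x, F2 x) * ∫ x, G2 x := by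
    rw [hswap_eq, Measure.volume_eq_prod]
    calc ∫ p : ℝ × ℝ, ((fun q : ℝ × ℝ => F2 q.1 * G2 (q.2 - q.1)) ∘ Prod.swap) p
          ∂((volume : Measure ℝ).prod volume)
        = ∫ p : ℝ × ℝ, (fun q : ℝ × ℝ => F2 q.1 * G2 (q.2 - q.1)) p
          ∂((volume : Measure ℝ).prod volume) :=
          integral_prod_swap (fun q : ℝ × ℝ => F2 q.1 * G2 (q.2 - q.1))
      _ = (∫ x, F2 x) * ∫ x, G2 x := by rw [← Measure.volume_eq_prod]; exact hP2val
  -- the dominating function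
  set g : ℝ × ℝ → ℝ :=
    fun p => F1 p.1 * G1 (p.2 - p.1) + F2 p.1 * G2 (p.2 - p.1) + F2 p.2 * G2 (p.2 - p.1)
    with hg
  have hgint : Integrable g (volume : Measure (ℝ × ℝ)) := (hP1int.add hP2int).add hP3int
  have hgval : ∫ p : ℝ × ℝ, g p =
      c^2 * ((n:ℝ)+4) * 2 + 4*c^2*((n:ℝ)+2)*π + 4*c^2*((n:ℝ)+2)*π := by
    calc ∫ p : ℝ × ℝ, g p
        = (∫ p : ℝ × ℝ, F1 p.1 * G1 (p.2 - p.1) + F2 p.1 * G2 (p.2 - p.1)) +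
            ∫ p : ℝ × ℝ, F2 p.2 * G2 (p.2 - p.1) :=
          integral_add (hP1int.add hP2int) hP3int
      _ = ((∫ p : ℝ × ℝ, F1 p.1 * G1 (p.2 - p.1)) + ∫ p : ℝ × ℝ, F2 p.1 * G2 (p.2 - p.1)) +
            ∫ p : ℝ × ℝ, F2 p.2 * G2 (p.2 - p.1) := by rw [integral_add hP1int hP2int]
      _ = c^2 * ((n:ℝ)+4) * 2 + 4*c^2*((n:ℝ)+2)*π + 4*c^2*((n:ℝ)+2)*π := by
          have hF1val : ∫ x, F1 x = c^2 * ((n:ℝ)+4) := by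
            rw [hF1, integral_const_mul, hKval]
          have hF2val : ∫ x, F2 x = 4*c^2 * ((n:ℝ)+2) := by
            rw [hF2, integral_const_mul, hSval]
          rw [hP1val, hP2val, hP3val, hF1val, hF2val, hG1val, hG2val]
  -- nonnegativity of g pieces
  have hg_nonneg : ∀ p : ℝ × ℝ, 0 ≤ g p := by
    intro p
    have h1 : 0 ≤ F1 p.1 * G1 (p.2 - p.1) := by
      apply mul_nonneg
      · exact mul_nonneg (by positivity) (hind K p.1).1
      · exact (hind _ _).1
    have h2 : 0 ≤ F2 p.1 * G2 (p.2 - p.1) := by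
      apply mul_nonneg
      · exact mul_nonneg (by positivity) (hind S p.1).1
      · exact (hG2pos _).le
    have h3 : 0 ≤ F2 p.2 * G2 (p.2 - p.1) := by
      apply mul_nonneg
      · exact mul_nonneg (by positivity) (hind S p.2).1
      · exact (hG2pos _).le
    rw [hg]; dsimp only; linarith
  -- support and square bounds for u
  have husupp : ∀ z : ℝ, z ∉ S → u z = 0 := by
    intro z hz
    rw [hS, Set.mem_Icc] at hz
    push_neg at hz
    rcases le_or_gt a z with h | h
    · exact plateau_supp α n (Or.inr (hz h).le)
    · exact plateau_supp α n (Or.inl h.le)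
  have hsq : ∀ z : ℝ, u z ^ 2 ≤ c^2 * Sind z := by
    intro z
    by_cases hz : z ∈ S
    · rw [hSind, Set.indicator_of_mem hz, mul_one]
      have h1 := plateau_nonneg α n z
      have h2 := plateau_le α n z
      nlinarith
    · rw [husupp z hz, hSind, Set.indicator_of_notMem hz]
      norm_num
  -- the pointwise bound
  have hpt : ∀ p : ℝ × ℝ, (u p.1 - u p.2) ^ 2 / |p.1 - p.2| ^ 2 ≤ g p := by
    rintro ⟨x, y⟩
    dsimp only
    by_cases heq : u x = u y
    · rw [heq, sub_self]
      simpa using hg_nonneg (x, y)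
    have hxy : x ≠ y := fun h => heq (by rw [h])
    have hw : (0:ℝ) < |x - y| ^ 2 := by
      have : |x - y| ≠ 0 := abs_ne_zero.2 (sub_ne_zero.2 hxy)
      positivity
    by_cases hd : |x - y| ≤ 1
    · -- short range
      have hmem : u x ≠ 0 ∨ u y ≠ 0 := by
        by_contra hcon; push_neg at hcon
        exact heq (by rw [hcon.1, hcon.2])
      have hxK : x ∈ K := by
        rw [hK, Set.mem_Icc]
        have habs := abs_le.1 hd
        rcases hmem with h | h
        · have hxS : x ∈ S := by
            by_contra hcon; exact h (husupp x hcon)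
          rw [hS, Set.mem_Icc] at hxS
          constructor <;> linarith [hxS.1, hxS.2]
        · have hyS : y ∈ S := by
            by_contra hcon; exact h (husupp y hcon)
          rw [hS, Set.mem_Icc] at hyS
          constructor <;> linarith [hyS.1, hyS.2, habs.1, habs.2]
      have hLHS : (u x - u y) ^ 2 / |x - y| ^ 2 ≤ c^2 := by
        rw [div_le_iff₀ hw]
        have hl := plateau_lip α n x y
        have : (u x - u y)^2 ≤ (c * |x-y|)^2 := by
          rw [← sq_abs (u x - u y)]
          exact pow_le_pow_left₀ (abs_nonneg _) hl 2
        nlinarith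
      have hmemI : y - x ∈ Icc (-1:ℝ) 1 := by
        have h' : |y - x| ≤ 1 := by rwa [abs_sub_comm]
        exact Set.mem_Icc.2 (abs_le.1 h')
      have ht1 : F1 x * G1 (y - x) = c^2 := by
        simp only [hF1, hG1, hKind, Set.indicator_of_mem hxK, Set.indicator_of_mem hmemI]
        ring
      have h2 : 0 ≤ F2 x * G2 (y - x) :=
        mul_nonneg (mul_nonneg (by positivity) (hind S x).1) (hG2pos _).le
      have h3 : 0 ≤ F2 y * G2 (y - x) :=
        mul_nonneg (mul_nonneg (by positivity) (hind S y).1) (hG2pos _).le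
      show _ ≤ F1 x * G1 (y - x) + F2 x * G2 (y - x) + F2 y * G2 (y - x)
      calc (u x - u y) ^ 2 / |x - y| ^ 2 ≤ c^2 := hLHS
        _ ≤ F1 x * G1 (y - x) + F2 x * G2 (y - x) + F2 y * G2 (y - x) := by
            rw [ht1]; linarith
    · -- long range
      push_neg at hd
      have hs : (y - x)^2 = |x - y|^2 := by
        rw [sq_abs]; ring
      have hnum : (u x - u y)^2 ≤ 2 * (c^2 * Sind x) + 2 * (c^2 * Sind y) := by
        have h1 := hsq x
        have h2 := hsq y
        nlinarith [sq_nonneg (u x + u y)]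
      have hstep : (u x - u y) ^ 2 / |x - y| ^ 2 ≤
          (2 * (c^2 * Sind x) + 2 * (c^2 * Sind y)) / |x - y| ^ 2 := by
        gcongr
      have hnum_nonneg : (0:ℝ) ≤ 2 * (c^2 * Sind x) + 2 * (c^2 * Sind y) := by
        have := (hind S x).1
        have := (hind S y).1
        positivity
      have hstep2 : (2 * (c^2 * Sind x) + 2 * (c^2 * Sind y)) / |x - y| ^ 2 ≤
          F2 x * G2 (y - x) + F2 y * G2 (y - x) := by
        rw [hF2, hG2]
        dsimp only
        rw [div_le_iff₀ hw, ← hs]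
        have hs1 : (1:ℝ) < (y - x)^2 := by rw [hs]; nlinarith
        have hinv : (0:ℝ) < 1 + (y-x)^2 := by positivity
        rw [show (4*c^2*Sind x * (1 + (y-x)^2)⁻¹ + 4*c^2*Sind y * (1 + (y-x)^2)⁻¹) * (y-x)^2
            = (4*c^2*Sind x + 4*c^2*Sind y) * ((y-x)^2 / (1 + (y-x)^2)) by field_simp]
        have hfrac : (1:ℝ)/2 ≤ (y-x)^2 / (1 + (y-x)^2) := by
          rw [div_le_div_iff₀ (by norm_num) hinv]
          nlinarith
        have hSx := (hind S x).1
        have hSy := (hind S y).1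
        nlinarith
      have h1 : 0 ≤ F1 x * G1 (y - x) := by
        apply mul_nonneg
        · rw [hF1]; exact mul_nonneg (by positivity) (hind K x).1
        · exact (hind _ _).1
      show _ ≤ F1 x * G1 (y - x) + F2 x * G2 (y - x) + F2 y * G2 (y - x)
      calc (u x - u y) ^ 2 / |x - y| ^ 2
          ≤ (2 * (c^2 * Sind x) + 2 * (c^2 * Sind y)) / |x - y| ^ 2 := hstep
        _ ≤ F2 x * G2 (y - x) + F2 y * G2 (y - x) := hstep2
        _ ≤ F1 x * G1 (y - x) + F2 x * G2 (y - x) + F2 y * G2 (y - x) := by linarith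
  -- measurability of the main integrand
  have humeas : Measurable u := (plateau_cont α n).measurable
  have hFnmeas : AEStronglyMeasurable
      (fun p : ℝ × ℝ => (u p.1 - u p.2) ^ 2 / |p.1 - p.2| ^ 2)
      (volume : Measure (ℝ × ℝ)) := by
    apply Measurable.aestronglyMeasurable
    apply Measurable.div
    · exact (((humeas.comp measurable_fst).sub (humeas.comp measurable_snd)).pow_const 2)
    · exact ((measurable_fst.sub measurable_snd).abs.pow_const 2)
  have hFn_nonneg : ∀ p : ℝ × ℝ, 0 ≤ (u p.1 - u p.2) ^ 2 / |p.1 - p.2| ^ 2 := by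
    intro p; positivity
  have hFnint : Integrable (fun p : ℝ × ℝ => (u p.1 - u p.2) ^ 2 / |p.1 - p.2| ^ 2)
      (volume : Measure (ℝ × ℝ)) := by
    apply hgint.mono' hFnmeas
    refine Filter.Eventually.of_forall fun p => ?_
    rw [Real.norm_eq_abs, abs_of_nonneg (hFn_nonneg p)]
    exact hpt p
  have hFnval : (∫ p : ℝ × ℝ, (u p.1 - u p.2) ^ 2 / |p.1 - p.2| ^ 2) ≤
      c ^ 2 * (2*((n:ℝ)+4) + 8*π*((n:ℝ)+2)) := by
    calc (∫ p : ℝ × ℝ, (u p.1 - u p.2) ^ 2 / |p.1 - p.2| ^ 2)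
        ≤ ∫ p : ℝ × ℝ, g p := integral_mono hFnint hgint hpt
      _ = c^2 * ((n:ℝ)+4) * 2 + 4*c^2*((n:ℝ)+2)*π + 4*c^2*((n:ℝ)+2)*π := hgval
      _ = c ^ 2 * (2*((n:ℝ)+4) + 8*π*((n:ℝ)+2)) := by ring
  -- the square integral
  have husqint : Integrable (fun x => u x ^ 2) (volume : Measure ℝ) := by
    apply (hSint.const_mul (c^2)).mono'
      ((humeas.pow_const 2).aestronglyMeasurable)
    refine Filter.Eventually.of_forall fun z => ?_
    rw [Real.norm_eq_abs, abs_of_nonneg (sq_nonneg _)]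
    exact hsq z
  have husqval : (∫ x, u x ^ 2) ≤ c ^ 2 * ((n:ℝ)+2) := by
    calc (∫ x, u x ^ 2) ≤ ∫ z, c^2 * Sind z :=
          integral_mono husqint (hSint.const_mul _) hsq
      _ = c^2 * ((n:ℝ)+2) := by rw [integral_const_mul, hSval]
  exact ⟨hFnint, hFnval, husqint, husqval⟩

end core
end plateauAux

/-- The plateau sequence is in `H^{1/2,2}(ℝ)`, bounded there,
and converges weakly to `0`. -/
theorem plateau_bounded_weak_null (α : ℝ) (hα : 1 / 2 ≤ α) (hα1 : α < 1) :
    (∀ n : ℕ, memH12 (plateau α n)) ∧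
    (∃ C : ℝ, ∀ n : ℕ,
      (2 * Real.pi)⁻¹ * gagliardo (plateau α n) +
        (∫ x : ℝ, plateau α n x ^ 2) ≤ C) ∧
    weakConvH12 (plateau α) (fun _ => 0) := by
  have hcore := fun n => plateau_core α n
  -- Part 1: membership
  have hmem : ∀ n : ℕ, memH12 (plateau α n) := fun n =>
    ⟨(memLp_two_iff_integrable_sq
        ((plateau_cont α n).measurable.aestronglyMeasurable)).2 (hcore n).2.2.1,
      (hcore n).1⟩
  -- uniform bounds
  have hgag_prod : ∀ n : ℕ,
      (∫ p : ℝ × ℝ, (plateau α n p.1 - plateau α n p.2) ^ 2 / |p.1 - p.2| ^ 2) ≤ 170 := by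
    intro n
    refine (hcore n).2.1.trans ?_
    have h1 : ((n:ℝ) ^ (-α)) ^ 2 * ((n:ℝ) + 4) ≤ 5 := c2_mul_le hα n (by norm_num) (by norm_num)
    have h2 : ((n:ℝ) ^ (-α)) ^ 2 * ((n:ℝ) + 2) ≤ 5 := c2_mul_le hα n (by norm_num) (by norm_num)
    have h20 : 0 ≤ ((n:ℝ) ^ (-α)) ^ 2 * ((n:ℝ) + 2) := by positivity
    have hπ4 := Real.pi_le_four
    have hπ0 := Real.pi_pos
    nlinarith
  have husq : ∀ n : ℕ, (∫ x, plateau α n x ^ 2) ≤ 5 := fun n =>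
    (hcore n).2.2.2.trans (c2_mul_le hα n (by norm_num) (by norm_num))
  have hgag_eq : ∀ n : ℕ, gagliardo (plateau α n) =
      ∫ p : ℝ × ℝ, (plateau α n p.1 - plateau α n p.2) ^ 2 / |p.1 - p.2| ^ 2 := by
    intro n
    have hint' : Integrable
        (fun p : ℝ × ℝ => (plateau α n p.1 - plateau α n p.2) ^ 2 / |p.1 - p.2| ^ 2)
        ((volume : Measure ℝ).prod volume) := by
      rw [← Measure.volume_eq_prod]; exact (hcore n).1
    rw [gagliardo, Measure.volume_eq_prod]
    exact (integral_prod _ hint').symm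
  refine ⟨hmem, ⟨200, fun n => ?_⟩, ?_⟩
  · -- Part 2: uniform bound
    have hg0 : 0 ≤ gagliardo (plateau α n) := by
      rw [hgag_eq n]
      exact integral_nonneg fun p => by positivity
    have hgle : gagliardo (plateau α n) ≤ 170 := by rw [hgag_eq n]; exact hgag_prod n
    have h2π : (1:ℝ) ≤ 2 * Real.pi := by nlinarith [Real.pi_gt_three]
    have hinv1 : (2 * Real.pi)⁻¹ ≤ 1 := inv_le_one_of_one_le₀ h2π
    calc (2 * Real.pi)⁻¹ * gagliardo (plateau α n) + ∫ x, plateau α n x ^ 2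
        ≤ 1 * gagliardo (plateau α n) + ∫ x, plateau α n x ^ 2 := by
          have := mul_le_mul_of_nonneg_right hinv1 hg0
          linarith
      _ ≤ 200 := by rw [one_mul]; linarith [husq n, hgle]
  · -- Part 3: weak convergence to 0
    intro φ hφ
    have hφm : AEStronglyMeasurable φ (volume : Measure ℝ) := hφ.1.aestronglyMeasurable
    have hφ2 : Integrable (fun x => φ x ^ 2) (volume : Measure ℝ) :=
      (memLp_two_iff_integrable_sq hφm).1 hφ.1
    have hG := hφ.2
    -- the L² pairing part
    set en : ℕ → ℝ := fun n => ∫ x, plateau α n x * φ x with hen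
    set tE : ℕ → ℝ := fun n => ∫ x, (Set.Ici ((n:ℝ) - 1)).indicator (fun x => φ x ^ 2) x with htE
    have htElim : Tendsto tE atTop (𝓝 0) := by
      apply tendsto_indicator_integral _ hφ2 _ (fun n => measurableSet_Ici)
      intro x
      have h1 : ∀ᶠ n : ℕ in atTop, x + 1 < (n : ℝ) :=
        (tendsto_natCast_atTop_atTop (R := ℝ)).eventually_gt_atTop (x + 1)
      filter_upwards [h1] with n hn
      simp only [Set.mem_Ici, not_le]
      linarith
    have htE0 : ∀ n, 0 ≤ tE n := fun n =>
      integral_nonneg fun x => Set.indicator_nonneg (fun _ _ => sq_nonneg _) x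
    have hptE : ∀ ε : ℝ, 0 < ε → ∀ (n : ℕ) (x : ℝ), |plateau α n x * φ x| ≤
        ε * plateau α n x ^ 2 +
          (Set.Ici ((n:ℝ) - 1)).indicator (fun x => φ x ^ 2) x / (4 * ε) := by
      intro ε hε n x
      by_cases hx : x ∈ Set.Ici ((n:ℝ) - 1)
      · rw [Set.indicator_of_mem hx]
        exact amgm_abs hε _ _
      · rw [Set.indicator_of_notMem hx]
        have hx' : x ≤ (n:ℝ) - 1 := by
          simp only [Set.mem_Ici, not_le] at hx
          exact hx.le
        rw [plateau_supp α n (Or.inl hx'), zero_mul, abs_zero]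
        positivity
    have hbE : ∀ ε : ℝ, 0 < ε → ∀ n : ℕ, Integrable (fun x =>
        ε * plateau α n x ^ 2 +
          (Set.Ici ((n:ℝ) - 1)).indicator (fun x => φ x ^ 2) x / (4 * ε))
        (volume : Measure ℝ) := fun ε hε n =>
      (((hcore n).2.2.1).const_mul ε).add
        ((hφ2.indicator measurableSet_Ici).div_const (4 * ε))
    have henint : ∀ n : ℕ, Integrable (fun x => plateau α n x * φ x) (volume : Measure ℝ) := by
      intro n
      apply (hbE 1 one_pos n).mono'
        (((plateau_cont α n).measurable.aestronglyMeasurable).mul hφm)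
      exact Filter.Eventually.of_forall fun x => by
        rw [Real.norm_eq_abs]; exact hptE 1 one_pos n x
    have hElim : Tendsto en atTop (𝓝 0) := by
      apply tendsto_of_amgm en tE 5 htElim htE0
      intro ε hε n
      have h1 : |en n| ≤ ∫ x, |plateau α n x * φ x| := by
        rw [hen]
        simpa only [Real.norm_eq_abs] using
          norm_integral_le_integral_norm (μ := (volume : Measure ℝ))
            (fun x => plateau α n x * φ x)
      have h2 : (∫ x, |plateau α n x * φ x|) ≤
          ∫ x, (ε * plateau α n x ^ 2 +
            (Set.Ici ((n:ℝ) - 1)).indicator (fun x => φ x ^ 2) x / (4 * ε)) :=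
        integral_mono (henint n).abs (hbE ε hε n) (hptE ε hε n)
      have h3 : (∫ x, (ε * plateau α n x ^ 2 +
            (Set.Ici ((n:ℝ) - 1)).indicator (fun x => φ x ^ 2) x / (4 * ε)))
          = ε * (∫ x, plateau α n x ^ 2) + tE n / (4 * ε) := by
        rw [integral_add (((hcore n).2.2.1).const_mul ε)
          ((hφ2.indicator measurableSet_Ici).div_const (4 * ε)), integral_const_mul,
          integral_div]
      have h4 : ε * (∫ x, plateau α n x ^ 2) ≤ ε * 5 :=
        mul_le_mul_of_nonneg_left (husq n) hε.le
      calc |en n| ≤ _ := h1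
        _ ≤ _ := h2
        _ = _ := h3
        _ ≤ ε * 5 + tE n / (4 * ε) := by linarith
    -- the seminorm pairing part
    set E : ℕ → Set (ℝ × ℝ) := fun n =>
      Prod.fst ⁻¹' Set.Ici ((n:ℝ) - 1) ∪ Prod.snd ⁻¹' Set.Ici ((n:ℝ) - 1) with hE
    have hEmeas : ∀ n, MeasurableSet (E n) := fun n =>
      (measurable_fst measurableSet_Ici).union (measurable_snd measurableSet_Ici)
    set dn : ℕ → ℝ := fun n => ∫ p : ℝ × ℝ,
      (plateau α n p.1 - plateau α n p.2) * (φ p.1 - φ p.2) / |p.1 - p.2| ^ 2 with hdn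
    set tD : ℕ → ℝ := fun n => ∫ p : ℝ × ℝ,
      (E n).indicator (fun p : ℝ × ℝ => (φ p.1 - φ p.2) ^ 2 / |p.1 - p.2| ^ 2) p with htD
    have htDlim : Tendsto tD atTop (𝓝 0) := by
      apply tendsto_indicator_integral _ hG E hEmeas
      intro p
      have h1 : ∀ᶠ n : ℕ in atTop, p.1 + 1 < (n : ℝ) :=
        (tendsto_natCast_atTop_atTop (R := ℝ)).eventually_gt_atTop (p.1 + 1)
      have h2 : ∀ᶠ n : ℕ in atTop, p.2 + 1 < (n : ℝ) :=
        (tendsto_natCast_atTop_atTop (R := ℝ)).eventually_gt_atTop (p.2 + 1)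
      filter_upwards [h1, h2] with n hn1 hn2
      rw [hE]
      simp only [Set.mem_union, Set.mem_preimage, Set.mem_Ici]
      push_neg
      constructor <;> linarith
    have htD0 : ∀ n, 0 ≤ tD n := fun n =>
      integral_nonneg fun p => Set.indicator_nonneg (fun q _ => by positivity) p
    have hptD : ∀ ε : ℝ, 0 < ε → ∀ (n : ℕ) (p : ℝ × ℝ),
        |(plateau α n p.1 - plateau α n p.2) * (φ p.1 - φ p.2) / |p.1 - p.2| ^ 2| ≤
        ε * ((plateau α n p.1 - plateau α n p.2) ^ 2 / |p.1 - p.2| ^ 2) +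
          (E n).indicator (fun p : ℝ × ℝ => (φ p.1 - φ p.2) ^ 2 / |p.1 - p.2| ^ 2) p
            / (4 * ε) := by
      intro ε hε n p
      by_cases hp : p ∈ E n
      · rw [Set.indicator_of_mem hp]
        exact amgm_div hε _ _ _ (by positivity)
      · have hp' := hp
        rw [hE] at hp'
        simp only [Set.mem_union, Set.mem_preimage, Set.mem_Ici] at hp'
        push_neg at hp'
        rw [Set.indicator_of_notMem hp, plateau_supp α n (Or.inl hp'.1.le),
          plateau_supp α n (Or.inl hp'.2.le)]
        simp
    have hbD : ∀ ε : ℝ, 0 < ε → ∀ n : ℕ, Integrable (fun p : ℝ × ℝ =>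
        ε * ((plateau α n p.1 - plateau α n p.2) ^ 2 / |p.1 - p.2| ^ 2) +
          (E n).indicator (fun p : ℝ × ℝ => (φ p.1 - φ p.2) ^ 2 / |p.1 - p.2| ^ 2) p
            / (4 * ε)) (volume : Measure (ℝ × ℝ)) := fun ε hε n =>
      ((hcore n).1.const_mul ε).add ((hG.indicator (hEmeas n)).div_const (4 * ε))
    have hnmeas : ∀ n : ℕ, AEStronglyMeasurable (fun p : ℝ × ℝ =>
        (plateau α n p.1 - plateau α n p.2) * (φ p.1 - φ p.2) / |p.1 - p.2| ^ 2)
        (volume : Measure (ℝ × ℝ)) := by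
      intro n
      have h1 : AEStronglyMeasurable (fun p : ℝ × ℝ => φ p.1 - φ p.2)
          (volume : Measure (ℝ × ℝ)) := by
        rw [Measure.volume_eq_prod]
        exact hφm.comp_fst.sub hφm.comp_snd
      have h2 : Measurable (fun p : ℝ × ℝ => plateau α n p.1 - plateau α n p.2) :=
        ((plateau_cont α n).measurable.comp measurable_fst).sub
          ((plateau_cont α n).measurable.comp measurable_snd)
      have h3 : Measurable (fun p : ℝ × ℝ => |p.1 - p.2| ^ 2) :=
        (measurable_fst.sub measurable_snd).abs.pow_const 2
      exact ((h2.aestronglyMeasurable.mul h1).mul h3.inv.aestronglyMeasurable).congr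
        (Filter.Eventually.of_forall fun p => (div_eq_mul_inv _ _).symm)
    have hnint : ∀ n : ℕ, Integrable (fun p : ℝ × ℝ =>
        (plateau α n p.1 - plateau α n p.2) * (φ p.1 - φ p.2) / |p.1 - p.2| ^ 2)
        (volume : Measure (ℝ × ℝ)) := by
      intro n
      apply (hbD 1 one_pos n).mono' (hnmeas n)
      exact Filter.Eventually.of_forall fun p => by
        rw [Real.norm_eq_abs]; exact hptD 1 one_pos n p
    have hDlim : Tendsto dn atTop (𝓝 0) := by
      apply tendsto_of_amgm dn tD 170 htDlim htD0
      intro ε hε n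
      have h1 : |dn n| ≤ ∫ p : ℝ × ℝ,
          |(plateau α n p.1 - plateau α n p.2) * (φ p.1 - φ p.2) / |p.1 - p.2| ^ 2| := by
        rw [hdn]
        simpa only [Real.norm_eq_abs] using
          norm_integral_le_integral_norm (μ := (volume : Measure (ℝ × ℝ)))
            (fun p : ℝ × ℝ =>
              (plateau α n p.1 - plateau α n p.2) * (φ p.1 - φ p.2) / |p.1 - p.2| ^ 2)
      have h2 : (∫ p : ℝ × ℝ,
          |(plateau α n p.1 - plateau α n p.2) * (φ p.1 - φ p.2) / |p.1 - p.2| ^ 2|) ≤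
          ∫ p : ℝ × ℝ, (ε * ((plateau α n p.1 - plateau α n p.2) ^ 2 / |p.1 - p.2| ^ 2) +
            (E n).indicator (fun p : ℝ × ℝ => (φ p.1 - φ p.2) ^ 2 / |p.1 - p.2| ^ 2) p
              / (4 * ε)) :=
        integral_mono (hnint n).abs (hbD ε hε n) (hptD ε hε n)
      have h3 : (∫ p : ℝ × ℝ, (ε * ((plateau α n p.1 - plateau α n p.2) ^ 2 / |p.1 - p.2| ^ 2) +
            (E n).indicator (fun p : ℝ × ℝ => (φ p.1 - φ p.2) ^ 2 / |p.1 - p.2| ^ 2) p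
              / (4 * ε)))
          = ε * (∫ p : ℝ × ℝ, (plateau α n p.1 - plateau α n p.2) ^ 2 / |p.1 - p.2| ^ 2)
            + tD n / (4 * ε) := by
        rw [integral_add ((hcore n).1.const_mul ε)
          ((hG.indicator (hEmeas n)).div_const (4 * ε)), integral_const_mul, integral_div]
      have h4 : ε * (∫ p : ℝ × ℝ, (plateau α n p.1 - plateau α n p.2) ^ 2 / |p.1 - p.2| ^ 2)
          ≤ ε * 170 := mul_le_mul_of_nonneg_left (hgag_prod n) hε.le
      calc |dn n| ≤ _ := h1
        _ ≤ _ := h2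
        _ = _ := h3
        _ ≤ ε * 170 + tD n / (4 * ε) := by linarith
    -- assemble
    have hkey : ∀ n : ℕ, innerH12 (plateau α n) φ = (2 * Real.pi)⁻¹ * dn n + en n := by
      intro n
      have h5 : (∫ x : ℝ, ∫ y : ℝ,
          (plateau α n x - plateau α n y) * (φ x - φ y) / |x - y| ^ 2) = dn n := by
        have hint' : Integrable (fun p : ℝ × ℝ =>
            (plateau α n p.1 - plateau α n p.2) * (φ p.1 - φ p.2) / |p.1 - p.2| ^ 2)
            ((volume : Measure ℝ).prod volume) := by
          rw [← Measure.volume_eq_prod]; exact hnint n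
        rw [hdn]
        rw [Measure.volume_eq_prod]
        exact (integral_prod _ hint').symm
      simp only [innerH12]
      rw [h5, hen]
    have hzero : innerH12 (fun _ => 0) φ = 0 := by
      simp [innerH12]
    rw [hzero]
    have hfinal : Tendsto (fun n => (2 * Real.pi)⁻¹ * dn n + en n) atTop
        (𝓝 ((2 * Real.pi)⁻¹ * 0 + 0)) := (hDlim.const_mul _).add hElim
    refine Tendsto.congr (fun n => (hkey n).symm) ?_
    simpa using hfinal
end
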